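/- arXiv:0905.0812 — 5 statements merged into one kernel-verified Lean document; each statement's English description precedes it below -/
import Mathlib

section
/- Let 0 < p₀ ≤ p₁ ≤ ∞ and let a, b, c ∈ [0,∞). Then (a ⊞_{p₀} b) ⊞_{p₁} c ≤ a ⊞_{p₀} (b ⊞_{p₁} c). -/
open scoped ENNReal

/-- `t ⊞_p s`: for `p < ∞`, `(t^p + s^p)^(1/p)`; for `p = ∞`, `max t s`. -/
noncomputable def boxPlus (p : ℝ≥0∞) (t s : ℝ) : ℝ :=
  if p = ∞ then max t s else (t ^ p.toReal + s ^ p.toReal) ^ (1 / p.toReal)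

/-- The recursively defined seminorms `|||x|||_(k)` (0-indexed). -/
noncomputable def seqNorm (p : ℕ → ℝ≥0∞) (x : ℕ → ℝ) : ℕ → ℝ
  | 0 => boxPlus (p 0) |x 0| |x 1|
  | k + 1 => boxPlus (p (k + 1)) (seqNorm p x k) |x (k + 2)|

/-- `Φ_p(x) = lim_k |||x|||_(k)`, as the supremum of the nondecreasing sequence. -/
noncomputable def Phi (p : ℕ → ℝ≥0∞) (x : ℕ → ℝ) : ℝ≥0∞ :=
  ⨆ k, ENNReal.ofReal (seqNorm p x k)

/-- `x` is a bounded real sequence, i.e. `x ∈ ℓ^∞`. -/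
def IsBddSeq (x : ℕ → ℝ) : Prop := ∃ M : ℝ, ∀ n, |x n| ≤ M

/-- Membership in the variable exponent space `ℓ^{p(·)}`. -/
def MemVLp (p : ℕ → ℝ≥0∞) (x : ℕ → ℝ) : Prop := IsBddSeq x ∧ Phi p x < ⊤

/-- Key convexity inequality: for `r ≥ 1`, `t ↦ (t+u)^r - t^r` is monotone. -/
lemma boxPlus_key {r u x y : ℝ} (hr : 1 ≤ r) (hu : 0 ≤ u) (hx : 0 ≤ x) (hxy : x ≤ y) :
    (x + u) ^ r + y ^ r ≤ (y + u) ^ r + x ^ r := by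
  have hy : 0 ≤ y := hx.trans hxy
  rcases eq_or_lt_of_le hu with h | hu'
  · simp [← h, add_comm]
  rcases eq_or_lt_of_le hxy with h | hxy'
  · subst h; exact le_of_eq (by ring)
  have hT : 0 < y + u - x := by linarith
  set T := y + u - x with hTdef
  set A := (y - x) / T with hA
  set B := u / T with hB
  have hA0 : 0 ≤ A := div_nonneg (by linarith) hT.le
  have hB0 : 0 ≤ B := div_nonneg hu hT.le
  have hAB : A + B = 1 := by
    rw [hA, hB, ← add_div, hTdef, div_eq_one_iff_eq (ne_of_gt (by linarith))]
    ring
  have hconv := convexOn_rpow hr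
  have hmem1 : x ∈ Set.Ici (0:ℝ) := hx
  have hmem2 : (y + u) ∈ Set.Ici (0:ℝ) := by simp [Set.mem_Ici]; linarith
  have h1 := hconv.2 hmem1 hmem2 hA0 hB0 hAB
  have h2 := hconv.2 hmem1 hmem2 hB0 hA0 (by linarith)
  simp only [smul_eq_mul] at h1 h2
  have e1 : A * x + B * (y + u) = x + u := by
    rw [hA, hB, div_mul_eq_mul_div, div_mul_eq_mul_div, ← add_div, div_eq_iff hT.ne', hTdef]; ring
  have e2 : B * x + A * (y + u) = y := by
    rw [hA, hB, div_mul_eq_mul_div, div_mul_eq_mul_div, ← add_div, div_eq_iff hT.ne', hTdef]; ring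
  rw [e1] at h1
  rw [e2] at h2
  have hx' : A * x ^ r + B * x ^ r = x ^ r := by rw [← add_mul, hAB, one_mul]
  have hyu' : A * (y + u) ^ r + B * (y + u) ^ r = (y + u) ^ r := by
    rw [← add_mul, hAB, one_mul]
  linarith

theorem boxPlus_assoc_ineq (p₀ p₁ : ℝ≥0∞) (hp₀ : 0 < p₀) (hp : p₀ ≤ p₁)
    (a b c : ℝ) (ha : 0 ≤ a) (hb : 0 ≤ b) (hc : 0 ≤ c) :
    boxPlus p₁ (boxPlus p₀ a b) c ≤ boxPlus p₀ a (boxPlus p₁ b c) := by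
  by_cases h₁ : p₁ = ∞
  · by_cases h₀ : p₀ = ∞
    · simp [boxPlus, h₀, h₁, max_assoc]
    · have hp' : 0 < p₀.toReal := ENNReal.toReal_pos hp₀.ne' h₀
      set p := p₀.toReal
      simp only [boxPlus, h₀, h₁, if_true, if_false, ite_true, ite_false]
      apply max_le
      · apply Real.rpow_le_rpow (by positivity) _ (by positivity)
        have : b ^ p ≤ (max b c) ^ p :=
          Real.rpow_le_rpow hb (le_max_left _ _) hp'.le
        linarith
      · have h1 : c = (c ^ p) ^ (1 / p) := by
          rw [one_div, Real.rpow_rpow_inv hc hp'.ne']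
        have h2 : c ^ p ≤ (max b c) ^ p :=
          Real.rpow_le_rpow hc (le_max_right _ _) hp'.le
        calc c = (c ^ p) ^ (1 / p) := h1
          _ ≤ (a ^ p + (max b c) ^ p) ^ (1 / p) :=
            Real.rpow_le_rpow (by positivity)
              (by linarith [Real.rpow_nonneg ha p]) (by positivity)
  · have h₀ : p₀ ≠ ∞ := fun h => h₁ (top_le_iff.mp (h ▸ hp))
    have hp' : 0 < p₀.toReal := ENNReal.toReal_pos hp₀.ne' h₀
    have hq' : 0 < p₁.toReal := ENNReal.toReal_pos (hp₀.trans_le hp).ne' h₁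
    have hpq : p₀.toReal ≤ p₁.toReal := ENNReal.toReal_mono h₁ hp
    set p := p₀.toReal
    set q := p₁.toReal
    set r := q / p with hrdef
    have hr : 1 ≤ r := (one_le_div hp').2 hpq
    have hr0 : 0 < r := lt_of_lt_of_le one_pos hr
    simp only [boxPlus, h₀, h₁, if_false, ite_false]
    set u := a ^ p with hu
    set v := b ^ p with hv
    set w := c ^ q with hw
    have hu0 : 0 ≤ u := Real.rpow_nonneg ha p
    have hv0 : 0 ≤ v := Real.rpow_nonneg hb p
    have hw0 : 0 ≤ w := Real.rpow_nonneg hc q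
    have hpr : p * r = q := by rw [hrdef]; field_simp
    have ebq : b ^ q = v ^ r := by rw [hv, ← Real.rpow_mul hb, hpr]
    rw [ebq]
    have e1 : (1 / p) * q = r := by rw [hrdef]; ring
    have eL : ((u + v) ^ (1 / p)) ^ q = (u + v) ^ r := by
      rw [← Real.rpow_mul (by positivity), e1]
    rw [eL]
    set s := (v ^ r + w) ^ (1 / r) with hsdef
    have hs0 : 0 ≤ s := Real.rpow_nonneg (by positivity) _
    have hsr : s ^ r = v ^ r + w := by
      rw [hsdef, one_div, Real.rpow_inv_rpow (by positivity) hr0.ne']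
    have hvs : v ≤ s := by
      have hvr : v = (v ^ r) ^ (1 / r) := by
        rw [one_div, Real.rpow_rpow_inv hv0 hr0.ne']
      rw [hvr, hsdef]
      exact Real.rpow_le_rpow (by positivity) (by linarith) (by positivity)
    have e2 : (1 / q) * p = 1 / r := by rw [hrdef, one_div_div]; ring
    have eR : ((v ^ r + w) ^ (1 / q)) ^ p = s := by
      rw [← Real.rpow_mul (by positivity), e2, hsdef]
    rw [eR]
    have core : (u + v) ^ r + w ≤ (u + s) ^ r := by
      have hk := boxPlus_key hr hu0 hv0 hvs
      rw [add_comm v u, add_comm s u] at hk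
      linarith
    have e3 : r * (1 / q) = 1 / p := by
      rw [hrdef]
      field_simp
    calc ((u + v) ^ r + w) ^ (1 / q)
        ≤ ((u + s) ^ r) ^ (1 / q) :=
          Real.rpow_le_rpow (by positivity) core (by positivity)
      _ = (u + s) ^ (1 / p) := by rw [← Real.rpow_mul (by positivity), e3]
end

section
/- Let p : ℕ → [1,∞]. The functional Φ_p is a norm on the vector space ℓ^{p(·)} = {x ∈ ℓ^∞ : Φ_p(x) < ∞}: for all x, y ∈ ℓ^{p(·)} and scalars λ ∈ ℝ one has Φ_p(x + y) ≤ Φ_p(x) + Φ_p(y), Φ_p(λx) = |λ|·Φ_p(x), and Φ_p(x) = 0 if and only if x = 0. -/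
open scoped ENNReal

section lemmas

variable {q : ℝ≥0∞} {t s t' s' : ℝ}

lemma one_le_toReal (h1 : 1 ≤ q) (h2 : q ≠ ∞) : 1 ≤ q.toReal := by
  have := ENNReal.toReal_mono h2 h1
  simpa using this

lemma toReal_pos' (h1 : 1 ≤ q) (h2 : q ≠ ∞) : 0 < q.toReal :=
  lt_of_lt_of_le one_pos (one_le_toReal h1 h2)

lemma le_boxPlus_left (h1 : 1 ≤ q) (ht : 0 ≤ t) (hs : 0 ≤ s) : t ≤ boxPlus q t s := by
  unfold boxPlus
  split_ifs with h
  · exact le_max_left _ _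
  · have ha : 0 < q.toReal := toReal_pos' h1 h
    calc t = (t ^ q.toReal) ^ (1 / q.toReal) := by
            rw [← Real.rpow_mul ht, mul_one_div, div_self ha.ne', Real.rpow_one]
      _ ≤ (t ^ q.toReal + s ^ q.toReal) ^ (1 / q.toReal) := by
            apply Real.rpow_le_rpow (Real.rpow_nonneg ht _)
            · exact le_add_of_nonneg_right (Real.rpow_nonneg hs _)
            · positivity

lemma le_boxPlus_right (h1 : 1 ≤ q) (ht : 0 ≤ t) (hs : 0 ≤ s) : s ≤ boxPlus q t s := by
  unfold boxPlus
  split_ifs with h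
  · exact le_max_right _ _
  · have ha : 0 < q.toReal := toReal_pos' h1 h
    calc s = (s ^ q.toReal) ^ (1 / q.toReal) := by
            rw [← Real.rpow_mul hs, mul_one_div, div_self ha.ne', Real.rpow_one]
      _ ≤ (t ^ q.toReal + s ^ q.toReal) ^ (1 / q.toReal) := by
            apply Real.rpow_le_rpow (Real.rpow_nonneg hs _)
            · exact le_add_of_nonneg_left (Real.rpow_nonneg ht _)
            · positivity

lemma boxPlus_nonneg (h1 : 1 ≤ q) (ht : 0 ≤ t) (hs : 0 ≤ s) : 0 ≤ boxPlus q t s :=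
  le_trans ht (le_boxPlus_left h1 ht hs)

lemma boxPlus_mono (ht : 0 ≤ t) (hs : 0 ≤ s) (htt : t ≤ t') (hss : s ≤ s') :
    boxPlus q t s ≤ boxPlus q t' s' := by
  unfold boxPlus
  split_ifs with h
  · exact max_le_max htt hss
  · apply Real.rpow_le_rpow
    · positivity
    · exact add_le_add (Real.rpow_le_rpow ht htt (ENNReal.toReal_nonneg))
        (Real.rpow_le_rpow hs hss (ENNReal.toReal_nonneg))
    · positivity

lemma boxPlus_add_le (h1 : 1 ≤ q) (ht : 0 ≤ t) (hs : 0 ≤ s) (ht' : 0 ≤ t') (hs' : 0 ≤ s') :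
    boxPlus q (t + t') (s + s') ≤ boxPlus q t s + boxPlus q t' s' := by
  unfold boxPlus
  split_ifs with h
  · exact max_le (add_le_add (le_max_left _ _) (le_max_left _ _))
      (add_le_add (le_max_right _ _) (le_max_right _ _))
  · have ha : 1 ≤ q.toReal := one_le_toReal h1 h
    have := Real.Lp_add_le (Finset.univ : Finset (Fin 2)) (![t, s]) (![t', s']) ha
    simp only [Fin.sum_univ_two, Matrix.cons_val_zero, Matrix.cons_val_one, Matrix.head_cons,
      abs_of_nonneg, ht, hs, ht', hs', add_nonneg ht ht', add_nonneg hs hs'] at this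
    exact this

lemma boxPlus_smul (h1 : 1 ≤ q) (ht : 0 ≤ t) (hs : 0 ≤ s) {c : ℝ} (hc : 0 ≤ c) :
    boxPlus q (c * t) (c * s) = c * boxPlus q t s := by
  unfold boxPlus
  split_ifs with h
  · exact (mul_max_of_nonneg t s hc).symm
  · have ha : 0 < q.toReal := toReal_pos' h1 h
    rw [Real.mul_rpow hc ht, Real.mul_rpow hc hs, ← mul_add,
      Real.mul_rpow (by positivity) (by positivity),
      ← Real.rpow_mul hc, mul_one_div, div_self ha.ne', Real.rpow_one]

lemma boxPlus_zero (h1 : 1 ≤ q) : boxPlus q 0 0 = 0 := by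
  have := boxPlus_smul (q := q) h1 (t := 0) (s := 0) le_rfl le_rfl (c := 0) le_rfl
  simpa using this

variable {p : ℕ → ℝ≥0∞} {x y : ℕ → ℝ}

lemma seqNorm_nonneg (hp : ∀ n, 1 ≤ p n) (k : ℕ) : 0 ≤ seqNorm p x k := by
  induction k with
  | zero => exact boxPlus_nonneg (hp 0) (abs_nonneg _) (abs_nonneg _)
  | succ k ih => exact boxPlus_nonneg (hp (k+1)) ih (abs_nonneg _)

lemma abs_le_seqNorm (hp : ∀ n, 1 ≤ p n) {n k : ℕ} (hn : n ≤ k + 1) :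
    |x n| ≤ seqNorm p x k := by
  induction k with
  | zero =>
    interval_cases n
    · exact le_boxPlus_left (hp 0) (abs_nonneg _) (abs_nonneg _)
    · exact le_boxPlus_right (hp 0) (abs_nonneg _) (abs_nonneg _)
  | succ k ih =>
    rcases Nat.lt_or_ge n (k + 2) with h | h
    · exact le_trans (ih (by omega))
        (le_boxPlus_left (hp (k+1)) (seqNorm_nonneg hp k) (abs_nonneg _))
    · have : n = k + 2 := by omega
      subst this
      exact le_boxPlus_right (hp (k+1)) (seqNorm_nonneg hp k) (abs_nonneg _)

lemma seqNorm_add_le (hp : ∀ n, 1 ≤ p n) (k : ℕ) :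
    seqNorm p (x + y) k ≤ seqNorm p x k + seqNorm p y k := by
  induction k with
  | zero =>
    calc seqNorm p (x + y) 0 = boxPlus (p 0) |(x+y) 0| |(x+y) 1| := rfl
      _ ≤ boxPlus (p 0) (|x 0| + |y 0|) (|x 1| + |y 1|) :=
          boxPlus_mono (abs_nonneg _) (abs_nonneg _) (abs_add_le _ _) (abs_add_le _ _)
      _ ≤ _ := boxPlus_add_le (hp 0) (abs_nonneg _) (abs_nonneg _) (abs_nonneg _) (abs_nonneg _)
  | succ k ih =>
    calc seqNorm p (x + y) (k+1)
        = boxPlus (p (k+1)) (seqNorm p (x+y) k) |(x+y) (k+2)| := rfl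
      _ ≤ boxPlus (p (k+1)) (seqNorm p x k + seqNorm p y k) (|x (k+2)| + |y (k+2)|) :=
          boxPlus_mono (seqNorm_nonneg hp k) (abs_nonneg _) ih (abs_add_le _ _)
      _ ≤ _ := boxPlus_add_le (hp (k+1)) (seqNorm_nonneg hp k) (abs_nonneg _)
          (seqNorm_nonneg hp k) (abs_nonneg _)

lemma seqNorm_smul (hp : ∀ n, 1 ≤ p n) (l : ℝ) (k : ℕ) :
    seqNorm p (l • x) k = |l| * seqNorm p x k := by
  induction k with
  | zero =>
    show boxPlus (p 0) |l * x 0| |l * x 1| = |l| * boxPlus (p 0) |x 0| |x 1|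
    rw [abs_mul, abs_mul]
    exact boxPlus_smul (hp 0) (abs_nonneg _) (abs_nonneg _) (abs_nonneg l)
  | succ k ih =>
    show boxPlus (p (k+1)) (seqNorm p (l • x) k) |l * x (k+2)|
        = |l| * boxPlus (p (k+1)) (seqNorm p x k) |x (k+2)|
    rw [ih, abs_mul]
    exact boxPlus_smul (hp (k+1)) (seqNorm_nonneg hp k) (abs_nonneg _) (abs_nonneg l)

lemma seqNorm_zero (hp : ∀ n, 1 ≤ p n) (k : ℕ) : seqNorm p (0 : ℕ → ℝ) k = 0 := by
  induction k with
  | zero => show boxPlus (p 0) |(0:ℝ)| |(0:ℝ)| = 0; simpa using boxPlus_zero (hp 0)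
  | succ k ih =>
    show boxPlus (p (k+1)) (seqNorm p 0 k) |(0:ℝ)| = 0
    rw [ih]; simpa using boxPlus_zero (hp (k+1))

end lemmas

theorem Phi_is_norm (p : ℕ → ℝ≥0∞) (hp : ∀ n, 1 ≤ p n) :
    (∀ x y : ℕ → ℝ, MemVLp p x → MemVLp p y →
      Phi p (x + y) ≤ Phi p x + Phi p y) ∧
    (∀ (l : ℝ) (x : ℕ → ℝ), MemVLp p x →
      Phi p (l • x) = ENNReal.ofReal |l| * Phi p x) ∧
    (∀ x : ℕ → ℝ, MemVLp p x → (Phi p x = 0 ↔ x = 0)) := by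
  refine ⟨fun x y _ _ => ?_, fun l x _ => ?_, fun x _ => ?_⟩
  · unfold Phi
    apply iSup_le
    intro k
    calc ENNReal.ofReal (seqNorm p (x + y) k)
        ≤ ENNReal.ofReal (seqNorm p x k + seqNorm p y k) :=
          ENNReal.ofReal_le_ofReal (seqNorm_add_le hp k)
      _ = ENNReal.ofReal (seqNorm p x k) + ENNReal.ofReal (seqNorm p y k) :=
          ENNReal.ofReal_add (seqNorm_nonneg hp k) (seqNorm_nonneg hp k)
      _ ≤ _ := add_le_add (le_iSup (fun k => ENNReal.ofReal (seqNorm p x k)) k)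
          (le_iSup (fun k => ENNReal.ofReal (seqNorm p y k)) k)
  · unfold Phi
    rw [ENNReal.mul_iSup]
    congr 1
    funext k
    rw [seqNorm_smul hp, ENNReal.ofReal_mul (abs_nonneg l)]
  · constructor
    · intro h
      funext n
      have h0 : ENNReal.ofReal (seqNorm p x n) ≤ Phi p x :=
        le_iSup (fun k => ENNReal.ofReal (seqNorm p x k)) n
      rw [h] at h0
      have h1 : ENNReal.ofReal (seqNorm p x n) = 0 := le_antisymm h0 zero_le
      have h2 : seqNorm p x n ≤ 0 := by
        rwa [ENNReal.ofReal_eq_zero] at h1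
      have := (abs_le_seqNorm (x := x) hp (n := n) (k := n) (by omega)).trans h2
      simpa [abs_nonpos_iff] using this
    · intro h
      subst h
      simp [Phi, seqNorm_zero hp]
end

section
/- Let p, q : ℕ → [1,∞] and ε > 0. Suppose that for every k ∈ ℕ the value q(k) is a limit point of the sequence (p(n))_n in the compact space [1,∞] (equivalently, liminf_{n→∞} |q(k) − p(n)| = 0 in the metric of the one-point compactification of [1,∞)). Then there is a strictly increasing sequence (n_k) of positive integers such that the placement map φ — sending y = (y_k) to the sequence with y₁ at coordinate n₁, y_{k+1} at coordinate n_k + 1 for k ≥ 1, and zero elsewhere — satisfies (1+ε)^{-1}·Φ_q(y) ≤ Φ_p(φ(y)) ≤ (1+ε)·Φ_q(y) for every bounded sequence y; in particular φ defines a (1+ε)²-isomorphic embedding of ℓ^{q(·)} into ℓ^{p(·)}. -/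
open scoped ENNReal NNReal

open scoped Classical in
/-- The placement map: `(place n y) (n 0) = y 0`, `(place n y) (n k + 1) = y (k+1)`,
and all other coordinates vanish. -/
noncomputable def place (n : ℕ → ℕ) (y : ℕ → ℝ) : ℕ → ℝ := fun j =>
  if j = n 0 then y 0
  else if h : ∃ k, j = n k + 1 then y (h.choose + 1)
  else 0

/-! ### NNReal versions -/

/-- NNReal version of boxPlus. -/
noncomputable def nbox (p : ℝ≥0∞) (t s : ℝ≥0) : ℝ≥0 :=
  if p = ∞ then max t s else (t ^ p.toReal + s ^ p.toReal) ^ (1 / p.toReal)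

/-- NNReal version of seqNorm. -/
noncomputable def nseq (p : ℕ → ℝ≥0∞) (x : ℕ → ℝ) : ℕ → ℝ≥0
  | 0 => nbox (p 0) ‖x 0‖₊ ‖x 1‖₊
  | k + 1 => nbox (p (k + 1)) (nseq p x k) ‖x (k + 2)‖₊

section nbox
variable {p a b : ℝ≥0∞} {t s c t' s' : ℝ≥0}

lemma one_le_toReal_s11 (h1 : 1 ≤ p) (h2 : p ≠ ∞) : 1 ≤ p.toReal := by
  rw [← ENNReal.toReal_one]; exact ENNReal.toReal_mono h2 h1

lemma toReal_pos'_s11 (h1 : 1 ≤ p) (h2 : p ≠ ∞) : 0 < p.toReal :=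
  lt_of_lt_of_le one_pos (one_le_toReal_s11 h1 h2)

lemma rpow_rpow_inv' {r : ℝ} (h : r ≠ 0) (t : ℝ≥0) : (t ^ r) ^ (1/r) = t := by
  rw [← NNReal.rpow_mul, mul_one_div, div_self h, NNReal.rpow_one]

lemma nbox_zero_right (h1 : 1 ≤ p) : nbox p t 0 = t := by
  unfold nbox
  split_ifs with h
  · exact max_eq_left (zero_le)
  · rw [NNReal.zero_rpow (toReal_pos'_s11 h1 h).ne', add_zero,
      rpow_rpow_inv' (toReal_pos'_s11 h1 h).ne']

lemma nbox_zero_left (h1 : 1 ≤ p) : nbox p 0 s = s := by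
  unfold nbox
  split_ifs with h
  · exact max_eq_right (zero_le)
  · rw [NNReal.zero_rpow (toReal_pos'_s11 h1 h).ne', zero_add,
      rpow_rpow_inv' (toReal_pos'_s11 h1 h).ne']

lemma nbox_mono (ht : t ≤ t') (hs : s ≤ s') : nbox p t s ≤ nbox p t' s' := by
  unfold nbox
  split_ifs with h
  · exact max_le_max ht hs
  · exact NNReal.rpow_le_rpow (add_le_add (NNReal.rpow_le_rpow ht (by positivity))
      (NNReal.rpow_le_rpow hs (by positivity))) (by positivity)

lemma left_le_nbox (h1 : 1 ≤ p) : t ≤ nbox p t s := by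
  calc t = nbox p t 0 := (nbox_zero_right h1).symm
  _ ≤ nbox p t s := nbox_mono le_rfl (zero_le)

lemma right_le_nbox (h1 : 1 ≤ p) : s ≤ nbox p t s := by
  calc s = nbox p 0 s := (nbox_zero_left h1).symm
  _ ≤ nbox p t s := nbox_mono (zero_le) le_rfl

lemma nbox_mul (h1 : 1 ≤ p) : nbox p (c * t) (c * s) = c * nbox p t s := by
  unfold nbox
  split_ifs with h
  · exact (mul_max_of_nonneg t s c.2).symm
  · have hr := (toReal_pos'_s11 h1 h).ne'
    rw [NNReal.mul_rpow, NNReal.mul_rpow, ← mul_add, NNReal.mul_rpow,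
      rpow_rpow_inv' hr]

/-- the modulus `(p⁻¹).toReal ∈ [0,1]`. -/
noncomputable def emod (p : ℝ≥0∞) : ℝ := (p⁻¹).toReal

lemma emod_top : emod ∞ = 0 := by simp [emod]

lemma emod_of_ne_top (h : a ≠ ∞) : emod a = (a.toReal)⁻¹ := by
  simp [emod, ENNReal.toReal_inv]

lemma nbox_anti (h1 : 1 ≤ a) (hab : a ≤ b) (t s : ℝ≥0) :
    nbox b t s ≤ nbox a t s := by
  rcases eq_or_ne b ∞ with rfl | hb
  · rw [show nbox ∞ t s = max t s from if_pos rfl]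
    exact max_le (left_le_nbox h1) (right_le_nbox h1)
  · have ha : a ≠ ∞ := ne_top_of_le_ne_top hb hab
    rw [show nbox b t s = _ from if_neg hb, show nbox a t s = _ from if_neg ha]
    exact NNReal.rpow_add_rpow_le t s (toReal_pos'_s11 h1 ha)
      (ENNReal.toReal_mono hb hab)

lemma nbox_le_mul (h1 : 1 ≤ a) (hab : a ≤ b) (t s : ℝ≥0) :
    nbox a t s ≤ (2:ℝ≥0) ^ (emod a - emod b) * nbox b t s := by
  rcases eq_or_ne a ∞ with rfl | ha
  · have : b = ∞ := top_le_iff.mp hab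
    subst this; simp
  have hr1 : 1 ≤ a.toReal := one_le_toReal_s11 h1 ha
  have hr0 : (0:ℝ) < a.toReal := lt_of_lt_of_le one_pos hr1
  rw [show nbox a t s = _ from if_neg ha, emod_of_ne_top ha]
  rcases eq_or_ne b ∞ with rfl | hb
  · rw [show nbox ∞ t s = max t s from if_pos rfl, emod_top, sub_zero]
    have h2 : t ^ a.toReal + s ^ a.toReal ≤ 2 * (max t s) ^ a.toReal := by
      rw [two_mul]
      exact add_le_add (NNReal.rpow_le_rpow (le_max_left _ _) hr0.le)
        (NNReal.rpow_le_rpow (le_max_right _ _) hr0.le)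
    calc (t ^ a.toReal + s ^ a.toReal) ^ (1 / a.toReal)
        ≤ (2 * (max t s) ^ a.toReal) ^ (1 / a.toReal) :=
          NNReal.rpow_le_rpow h2 (by positivity)
      _ = 2 ^ (a.toReal)⁻¹ * max t s := by
          rw [NNReal.mul_rpow, rpow_rpow_inv' hr0.ne', one_div]
  · have hs1 : 1 ≤ b.toReal := one_le_toReal_s11 (h1.trans hab) hb
    have hs0 : (0:ℝ) < b.toReal := lt_of_lt_of_le one_pos hs1
    have hrs : a.toReal ≤ b.toReal := ENNReal.toReal_mono hb hab
    rw [show nbox b t s = _ from if_neg hb, emod_of_ne_top hb]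
    set r := a.toReal with hrdef; set s' := b.toReal with hsdef
    have key := NNReal.rpow_add_le_mul_rpow_add_rpow (t ^ r) (s ^ r)
      (p := s'/r) ((one_le_div hr0).mpr hrs)
    have e1 : r * (s'/r) = s' := by field_simp
    rw [← NNReal.rpow_mul, ← NNReal.rpow_mul, e1] at key
    have key2 := NNReal.rpow_le_rpow key (z := 1/s') (by positivity)
    have e2 : s'/r * (1/s') = 1/r := by field_simp
    have e3 : (s'/r - 1) * (1/s') = r⁻¹ - s'⁻¹ := by field_simp
    rw [← NNReal.rpow_mul, e2, NNReal.mul_rpow, ← NNReal.rpow_mul, e3] at key2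
    exact key2

/-- Two-sided comparison with constant `2 ^ δ`. -/
lemma nbox_comp (ha : 1 ≤ a) (hb : 1 ≤ b) {δ : ℝ}
    (hδ : |emod a - emod b| ≤ δ) (t s : ℝ≥0) :
    nbox a t s ≤ (2:ℝ≥0) ^ δ * nbox b t s := by
  have hδ0 : 0 ≤ δ := le_trans (abs_nonneg _) hδ
  have h21 : (1:ℝ≥0) ≤ 2 ^ δ := by
    calc (1:ℝ≥0) = 2 ^ (0:ℝ) := (NNReal.rpow_zero 2).symm
    _ ≤ 2 ^ δ := NNReal.rpow_le_rpow_of_exponent_le one_le_two hδ0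
  rcases le_total a b with hab | hab
  · calc nbox a t s ≤ (2:ℝ≥0) ^ (emod a - emod b) * nbox b t s := nbox_le_mul ha hab t s
    _ ≤ (2:ℝ≥0) ^ δ * nbox b t s := by
        exact mul_le_mul_left (NNReal.rpow_le_rpow_of_exponent_le one_le_two
          ((le_abs_self _).trans hδ)) _
  · calc nbox a t s ≤ nbox b t s := nbox_anti hb hab t s
    _ ≤ (2:ℝ≥0) ^ δ * nbox b t s := le_mul_of_one_le_left (zero_le) h21

end nbox

lemma coe_nbox (p : ℝ≥0∞) (a b : ℝ≥0) : ((nbox p a b : ℝ≥0) : ℝ) = boxPlus p a b := by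
  unfold nbox boxPlus
  split_ifs with h
  · push_cast; rfl
  · push_cast [NNReal.coe_rpow]; rfl

lemma nseq_zero (p : ℕ → ℝ≥0∞) (x : ℕ → ℝ) :
    nseq p x 0 = nbox (p 0) ‖x 0‖₊ ‖x 1‖₊ := rfl

lemma nseq_succ (p : ℕ → ℝ≥0∞) (x : ℕ → ℝ) (k : ℕ) :
    nseq p x (k+1) = nbox (p (k+1)) (nseq p x k) ‖x (k+2)‖₊ := rfl

lemma seqNorm_eq_nseq (p : ℕ → ℝ≥0∞) (x : ℕ → ℝ) (k : ℕ) :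
    seqNorm p x k = ((nseq p x k : ℝ≥0) : ℝ) := by
  induction k with
  | zero =>
      show boxPlus (p 0) |x 0| |x 1| = _
      rw [show nseq p x 0 = nbox (p 0) ‖x 0‖₊ ‖x 1‖₊ from rfl, coe_nbox,
        coe_nnnorm, coe_nnnorm, Real.norm_eq_abs, Real.norm_eq_abs]
  | succ k ih =>
      show boxPlus (p (k+1)) (seqNorm p x k) |x (k+2)| = _
      rw [ih, show nseq p x (k+1) = nbox (p (k+1)) (nseq p x k) ‖x (k+2)‖₊ from rfl,
        coe_nbox, coe_nnnorm, Real.norm_eq_abs]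

lemma Phi_eq_nseq (p : ℕ → ℝ≥0∞) (x : ℕ → ℝ) :
    Phi p x = ⨆ k, ((nseq p x k : ℝ≥0) : ℝ≥0∞) := by
  unfold Phi
  refine iSup_congr fun k => ?_
  rw [seqNorm_eq_nseq, ENNReal.ofReal_coe_nnreal]

/-- The chain comparison lemma. -/
lemma nseq_le_mul (r q : ℕ → ℝ≥0∞) (hr : ∀ k, 1 ≤ r k) (hq : ∀ k, 1 ≤ q k)
    (δ : ℕ → ℝ) (hcmp : ∀ k, |emod (r k) - emod (q k)| ≤ δ k) (y : ℕ → ℝ) (K : ℕ) :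
    nseq r y K ≤ (2:ℝ≥0) ^ (∑ k ∈ Finset.range (K+1), δ k) * nseq q y K := by
  have hδ0 : ∀ k, 0 ≤ δ k := fun k => le_trans (abs_nonneg _) (hcmp k)
  induction K with
  | zero =>
      rw [Finset.sum_range_one]
      exact nbox_comp (hr 0) (hq 0) (hcmp 0) _ _
  | succ K ih =>
      set C : ℝ≥0 := (2:ℝ≥0) ^ (∑ k ∈ Finset.range (K+1), δ k) with hC
      have hC1 : 1 ≤ C := by
        rw [hC]
        calc (1:ℝ≥0) = 2 ^ (0:ℝ) := (NNReal.rpow_zero 2).symm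
        _ ≤ _ := NNReal.rpow_le_rpow_of_exponent_le one_le_two
            (Finset.sum_nonneg fun k _ => hδ0 k)
      calc nseq r y (K+1) = nbox (r (K+1)) (nseq r y K) ‖y (K+2)‖₊ := nseq_succ r y K
      _ ≤ nbox (r (K+1)) (C * nseq q y K) (C * ‖y (K+2)‖₊) :=
          nbox_mono ih (le_mul_of_one_le_left (zero_le) hC1)
      _ = C * nbox (r (K+1)) (nseq q y K) ‖y (K+2)‖₊ := nbox_mul (hr (K+1))
      _ ≤ C * ((2:ℝ≥0) ^ (δ (K+1)) * nbox (q (K+1)) (nseq q y K) ‖y (K+2)‖₊) :=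
          mul_le_mul_right (nbox_comp (hr (K+1)) (hq (K+1)) (hcmp (K+1)) _ _) _
      _ = (2:ℝ≥0) ^ (∑ k ∈ Finset.range (K+2), δ k) * nseq q y (K+1) := by
          rw [Finset.sum_range_succ, NNReal.rpow_add two_ne_zero, ← hC, ← mul_assoc,
            nseq_succ]

/-! ### Placement lemmas -/

lemma place_at_n0 (n : ℕ → ℕ) (y : ℕ → ℝ) : place n y (n 0) = y 0 := if_pos rfl

lemma place_at_succ {n : ℕ → ℕ} (hmono : StrictMono n) (y : ℕ → ℝ) (k : ℕ) :
    place n y (n k + 1) = y (k + 1) := by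
  unfold place
  have h1 : n k + 1 ≠ n 0 := by have := hmono.monotone (Nat.zero_le k); omega
  have h : ∃ j, n k + 1 = n j + 1 := ⟨k, rfl⟩
  rw [if_neg h1, dif_pos h]
  have hspec := h.choose_spec
  have hck : h.choose = k := hmono.injective (by omega)
  rw [hck]

lemma place_eq_zero (n : ℕ → ℕ) (y : ℕ → ℝ) (j : ℕ) (h1 : j ≠ n 0)
    (h2 : ∀ k, j ≠ n k + 1) : place n y j = 0 := by
  unfold place
  rw [if_neg h1, dif_neg (not_exists.mpr h2)]

/-- If every value `q k` is a limit point of the sequence `(p n)` in `[1,∞]`,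
then for every `ε > 0` the placement map along a suitable strictly increasing
sequence is a `(1+ε)`-embedding of `ℓ^{q(·)}` into `ℓ^{p(·)}`. -/
theorem embedding_lemma (p q : ℕ → ℝ≥0∞) (hp : ∀ m, 1 ≤ p m) (hq : ∀ k, 1 ≤ q k)
    (hcluster : ∀ k, MapClusterPt (q k) Filter.atTop p)
    (ε : ℝ) (hε : 0 < ε) :
    ∃ n : ℕ → ℕ, StrictMono n ∧ ∀ y : ℕ → ℝ, IsBddSeq y →
      (ENNReal.ofReal (1 + ε))⁻¹ * Phi q y ≤ Phi p (place n y) ∧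
      Phi p (place n y) ≤ ENNReal.ofReal (1 + ε) * Phi q y := by
  classical
  set D : ℝ := Real.logb 2 (1+ε) with hD
  have hDpos : 0 < D := Real.logb_pos one_lt_two (by linarith)
  set δ : ℕ → ℝ := fun k => D / 2^(k+1) with hδ
  have hδpos : ∀ k, 0 < δ k := fun k => by positivity
  have hsum_eq : ∀ K : ℕ, ∑ k ∈ Finset.range K, δ k = D * (1 - (1/2:ℝ)^K) := by
    intro K; induction K with
    | zero => simp
    | succ K ih => rw [Finset.sum_range_succ, ih, hδ]; simp only [one_div_pow]; ring
  have hsum_le : ∀ K, ∑ k ∈ Finset.range K, δ k ≤ D := by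
    intro K; rw [hsum_eq]
    nlinarith [pow_nonneg (by norm_num : (0:ℝ) ≤ 1/2) K, pow_le_one₀ (by norm_num : (0:ℝ) ≤ 1/2) (by norm_num : (1/2:ℝ) ≤ 1) (n := K)]
  -- continuity of emod at q k
  have hcont : ∀ k, ContinuousAt emod (q k) := by
    intro k
    have hq0 : q k ≠ 0 := (zero_lt_one.trans_le (hq k)).ne'
    have h1 : (q k)⁻¹ ≠ ∞ := by rwa [Ne, ENNReal.inv_eq_top]
    exact (ENNReal.continuousAt_toReal h1).comp continuous_inv.continuousAt
  have hex : ∀ k N, ∃ m, N < m ∧ |emod (p m) - emod (q k)| ≤ δ k := by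
    intro k N
    have hU : emod ⁻¹' Metric.ball (emod (q k)) (δ k) ∈ nhds (q k) :=
      hcont k (Metric.ball_mem_nhds _ (hδpos k))
    have hfr := (mapClusterPt_iff_frequently).1 (hcluster k) _ hU
    obtain ⟨m, hm, hball⟩ := Filter.frequently_atTop.1 hfr (N+1)
    refine ⟨m, by omega, le_of_lt ?_⟩
    simpa [Real.dist_eq] using hball
  -- construct the strictly increasing sequence
  obtain ⟨F, hF1, hF2⟩ : ∃ F : ℕ → ℕ → ℕ, (∀ k N, N < F k N) ∧
      (∀ k N, |emod (p (F k N)) - emod (q k)| ≤ δ k) := by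
    choose F h1 h2 using hex
    exact ⟨F, h1, h2⟩
  set nn : ℕ → ℕ := fun k =>
    Nat.rec (motive := fun _ => ℕ) (F 0 0) (fun k' ih => F (k'+1) ih) k with hnn
  have hstep : ∀ k, nn k < nn (k+1) := fun k => hF1 (k+1) (nn k)
  have hmono : StrictMono nn := strictMono_nat_of_lt_succ hstep
  have hn0 : 0 < nn 0 := hF1 0 0
  have hdist : ∀ k, |emod (p (nn k)) - emod (q k)| ≤ δ k := by
    intro k; cases k with
    | zero => exact hF2 0 0
    | succ k => exact hF2 (k+1) (nn k)
  refine ⟨nn, hmono, fun y _ => ?_⟩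
  set x := place nn y with hxdef
  set pn : ℕ → ℝ≥0∞ := fun k => p (nn k) with hpn
  -- sub-lemma A: below n 0
  have hA : ∀ m : ℕ, m + 1 ≤ nn 0 → nseq p x m = if m + 1 < nn 0 then (0:ℝ≥0) else ‖y 0‖₊ := by
    intro m
    induction m with
    | zero =>
        intro h1
        have hx0 : x 0 = 0 := place_eq_zero nn y 0 (by omega) (fun k => by omega)
        rw [nseq_zero, hx0, nnnorm_zero]
        by_cases h : 0 + 1 < nn 0
        · have hx1 : x 1 = 0 := by
            refine place_eq_zero nn y 1 (by omega) (fun k => ?_)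
            have := hmono.monotone (Nat.zero_le k); omega
          rw [if_pos h, hx1, nnnorm_zero, nbox_zero_left (hp 0)]
        · have hn01 : nn 0 = 1 := by omega
          have hx1 : x 1 = y 0 := by rw [← hn01]; exact place_at_n0 nn y
          rw [if_neg h, hx1, nbox_zero_left (hp 0)]
    | succ m ih =>
        intro h1
        have hm1 : m + 1 < nn 0 := by omega
        rw [nseq_succ, ih (by omega), if_pos hm1, nbox_zero_left (hp _)]
        by_cases h : m + 1 + 1 < nn 0
        · have hx2 : x (m+2) = 0 := by
            refine place_eq_zero nn y (m+2) (by omega) (fun k => ?_)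
            have := hmono.monotone (Nat.zero_le k); omega
          rw [hx2, nnnorm_zero, if_pos h]
        · have hn0m : nn 0 = m + 2 := by omega
          have hx2 : x (m+2) = y 0 := by rw [← hn0m]; exact place_at_n0 nn y
          rw [hx2, if_neg h]
  -- sub-lemma B: constancy across zero blocks
  have hB : ∀ K d, nn K + d < nn (K+1) → nseq p x (nn K + d) = nseq p x (nn K) := by
    intro K d
    induction d with
    | zero => intro _; rfl
    | succ d ih =>
        intro hlt
        have hx2 : x (nn K + d + 2) = 0 := by
          refine place_eq_zero nn y (nn K + d + 2) ?_ (fun k => ?_)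
          · have := hmono.monotone (Nat.zero_le K); omega
          · intro hk
            have h1 : nn K < nn k := by omega
            have h2 : nn k < nn (K+1) := by omega
            have ha : K < k := (hmono.lt_iff_lt (a := K) (b := k)).mp h1
            have hb : k < K + 1 := (hmono.lt_iff_lt (a := k) (b := K + 1)).mp h2
            omega
        have heq : nn K + (d+1) = (nn K + d) + 1 := rfl
        rw [heq, nseq_succ, show nn K + d + 1 + 1 = nn K + d + 2 from rfl, hx2,
          nnnorm_zero, nbox_zero_right (hp _), ih (by omega)]
  -- key: values at the chosen indices
  have hKey : ∀ K, nseq p x (nn K) = nseq pn y K := by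
    intro K
    induction K with
    | zero =>
        obtain ⟨m, hm⟩ : ∃ m, nn 0 = m + 1 := ⟨nn 0 - 1, by omega⟩
        rw [hm, nseq_succ]
        have h1 : nseq p x m = ‖y 0‖₊ := by
          rw [hA m (by omega), if_neg (show ¬(m + 1 < nn 0) by omega)]
        have h2 : x (m + 2) = y 1 := by
          rw [show m + 2 = nn 0 + 1 by omega]
          exact place_at_succ hmono y 0
        rw [h1, h2, nseq_zero, ← hm]
    | succ K ih =>
        have hlt : nn K < nn (K+1) := hstep K
        obtain ⟨m, hm⟩ : ∃ m, nn (K+1) = m + 1 := ⟨nn (K+1) - 1, by omega⟩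
        rw [hm, nseq_succ]
        have h2 : x (m + 2) = y (K + 2) := by
          rw [show m + 2 = nn (K+1) + 1 by omega]
          exact place_at_succ hmono y (K+1)
        have h1 : nseq p x m = nseq pn y K := by
          rw [show m = nn K + (m - nn K) by omega, hB K (m - nn K) (by omega), ih]
        rw [h1, h2, nseq_succ pn y K, ← hm]
  have hmono_seq : Monotone (nseq p x) := monotone_nat_of_le_succ fun k => by
    rw [nseq_succ]; exact left_le_nbox (hp (k+1))
  have hPhi : Phi p x = ⨆ K, ((nseq pn y K : ℝ≥0) : ℝ≥0∞) := by
    rw [Phi_eq_nseq]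
    apply le_antisymm
    · refine iSup_le fun m => ?_
      calc ((nseq p x m : ℝ≥0) : ℝ≥0∞) ≤ ((nseq p x (nn m) : ℝ≥0) : ℝ≥0∞) := by
            exact_mod_cast hmono_seq hmono.le_apply
      _ = ((nseq pn y m : ℝ≥0) : ℝ≥0∞) := by rw [hKey m]
      _ ≤ _ := le_iSup (fun K => ((nseq pn y K : ℝ≥0) : ℝ≥0∞)) m
    · refine iSup_le fun K => ?_
      rw [← hKey K]
      exact le_iSup (fun k => ((nseq p x k : ℝ≥0) : ℝ≥0∞)) (nn K)
  have hpn1 : ∀ k, 1 ≤ pn k := fun k => hp (nn k)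
  have hcmp1 : ∀ k, |emod (pn k) - emod (q k)| ≤ δ k := hdist
  have hcmp2 : ∀ k, |emod (q k) - emod (pn k)| ≤ δ k := fun k => by
    rw [abs_sub_comm]; exact hdist k
  have hCle : ∀ K : ℕ,
      (((2:ℝ≥0) ^ (∑ k ∈ Finset.range (K+1), δ k) : ℝ≥0) : ℝ≥0∞) ≤ ENNReal.ofReal (1+ε) := by
    intro K
    rw [ENNReal.ofReal]
    apply ENNReal.coe_le_coe.mpr
    rw [← NNReal.coe_le_coe, Real.coe_toNNReal _ (by linarith : (0:ℝ) ≤ 1+ε),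
      NNReal.coe_rpow]
    calc ((2:ℝ≥0):ℝ) ^ (∑ k ∈ Finset.range (K+1), δ k)
        = (2:ℝ) ^ (∑ k ∈ Finset.range (K+1), δ k) := by norm_num
      _ ≤ (2:ℝ) ^ D := Real.rpow_le_rpow_of_exponent_le one_le_two (hsum_le (K+1))
      _ = 1 + ε := Real.rpow_logb two_pos (by norm_num) (by linarith)
  have hofr0 : (ENNReal.ofReal (1+ε)) ≠ 0 := (ENNReal.ofReal_pos.mpr (by linarith)).ne'
  constructor
  · have h2 : Phi q y ≤ ENNReal.ofReal (1+ε) * Phi p x := by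
      rw [Phi_eq_nseq q y, hPhi]
      refine iSup_le fun K => ?_
      calc ((nseq q y K : ℝ≥0) : ℝ≥0∞)
          ≤ (((2:ℝ≥0) ^ (∑ k ∈ Finset.range (K+1), δ k) : ℝ≥0) : ℝ≥0∞) *
            ((nseq pn y K : ℝ≥0) : ℝ≥0∞) := by
            rw [← ENNReal.coe_mul]
            exact_mod_cast nseq_le_mul q pn hq hpn1 δ hcmp2 y K
        _ ≤ ENNReal.ofReal (1+ε) * ⨆ k, ((nseq pn y k : ℝ≥0) : ℝ≥0∞) :=
            mul_le_mul' (hCle K) (le_iSup (fun k => ((nseq pn y k : ℝ≥0) : ℝ≥0∞)) K)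
    calc (ENNReal.ofReal (1+ε))⁻¹ * Phi q y
        ≤ (ENNReal.ofReal (1+ε))⁻¹ * (ENNReal.ofReal (1+ε) * Phi p x) :=
          mul_le_mul_right h2 _
      _ = Phi p x := by
          rw [← mul_assoc, ENNReal.inv_mul_cancel hofr0 ENNReal.ofReal_ne_top, one_mul]
  · rw [hPhi, Phi_eq_nseq q y]
    refine iSup_le fun K => ?_
    calc ((nseq pn y K : ℝ≥0) : ℝ≥0∞)
        ≤ (((2:ℝ≥0) ^ (∑ k ∈ Finset.range (K+1), δ k) : ℝ≥0) : ℝ≥0∞) *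
          ((nseq q y K : ℝ≥0) : ℝ≥0∞) := by
          rw [← ENNReal.coe_mul]
          exact_mod_cast nseq_le_mul pn q hpn1 hq δ hcmp1 y K
      _ ≤ ENNReal.ofReal (1+ε) * ⨆ k, ((nseq q y k : ℝ≥0) : ℝ≥0∞) :=
          mul_le_mul' (hCle K) (le_iSup (fun k => ((nseq q y k : ℝ≥0) : ℝ≥0∞)) K)
end

section
/- Lower q₀-estimate: let 1 ≤ q₀ < ∞ and let p : ℕ → [1,∞) satisfy p(n) ≤ q₀ for every n. Then for any finite family x₁, …, x_n of bounded sequences with pairwise disjoint supports one has Φ_p(x₁ + ⋯ + x_n) ≥ (∑_{i=1}^n Φ_p(x_i)^{q₀})^{1/q₀}. -/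
open scoped ENNReal

/- ### Auxiliary lemmas -/

lemma gmono_aux {r c : ℝ} (hr : 1 ≤ r) (hc : 0 ≤ c) :
    MonotoneOn (fun x : ℝ => (x + c) ^ r - x ^ r) (Set.Ici 0) := by
  have hr0 : (0:ℝ) ≤ r := zero_le_one.trans hr
  apply monotoneOn_of_deriv_nonneg (convex_Ici 0)
  · exact (((Real.continuous_rpow_const hr0).comp (continuous_id.add continuous_const)).sub
      (Real.continuous_rpow_const hr0)).continuousOn
  · intro y hy
    rw [interior_Ici] at hy
    have h1 : HasDerivAt (fun z : ℝ => (z + c) ^ r) (r * (y + c) ^ (r - 1) * 1) y :=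
      (Real.hasDerivAt_rpow_const (Or.inr hr)).comp y ((hasDerivAt_id y).add_const c)
    have h2 : HasDerivAt (fun z : ℝ => z ^ r) (r * y ^ (r - 1)) y :=
      Real.hasDerivAt_rpow_const (Or.inr hr)
    exact (h1.sub h2).differentiableAt.differentiableWithinAt
  · intro y hy
    rw [interior_Ici] at hy
    have h1 : HasDerivAt (fun z : ℝ => (z + c) ^ r) (r * (y + c) ^ (r - 1) * 1) y :=
      (Real.hasDerivAt_rpow_const (Or.inr hr)).comp y ((hasDerivAt_id y).add_const c)
    have h2 : HasDerivAt (fun z : ℝ => z ^ r) (r * y ^ (r - 1)) y :=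
      Real.hasDerivAt_rpow_const (Or.inr hr)
    have h3 : HasDerivAt (fun x : ℝ => (x + c) ^ r - x ^ r)
        (r * (y + c) ^ (r - 1) * 1 - r * y ^ (r - 1)) y := h1.sub h2
    rw [h3.deriv]
    have : y ^ (r - 1) ≤ (y + c) ^ (r - 1) :=
      Real.rpow_le_rpow hy.le (by linarith) (by linarith)
    nlinarith

lemma diff_mono_aux {r c t1 t2 : ℝ} (hr : 1 ≤ r) (hc : 0 ≤ c) (h0 : 0 ≤ t1) (h12 : t1 ≤ t2) :
    (t1 + c) ^ r + t2 ^ r ≤ (t2 + c) ^ r + t1 ^ r := by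
  have := gmono_aux hr hc (Set.mem_Ici.2 h0) (Set.mem_Ici.2 (h0.trans h12)) h12
  simp only [sub_le_sub_iff] at this
  linarith [this]

lemma key_ineq_aux {q pr : ℝ} (h1 : 1 ≤ pr) (h2 : pr ≤ q) {A B s : ℝ}
    (hA : 0 ≤ A) (hB : 0 ≤ B) (hs : 0 ≤ s) :
    A + (B ^ (pr / q) + s ^ pr) ^ (q / pr) ≤ ((A + B) ^ (pr / q) + s ^ pr) ^ (q / pr) := by
  have hpr0 : (0:ℝ) < pr := lt_of_lt_of_le one_pos h1
  have hq0 : (0:ℝ) < q := lt_of_lt_of_le hpr0 h2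
  have hr : 1 ≤ q / pr := (one_le_div hpr0).2 h2
  have hc : 0 ≤ s ^ pr := Real.rpow_nonneg hs _
  have hmul : pr / q * (q / pr) = 1 := by field_simp
  have ht1 : (0:ℝ) ≤ B ^ (pr / q) := Real.rpow_nonneg hB _
  have h12 : B ^ (pr / q) ≤ (A + B) ^ (pr / q) :=
    Real.rpow_le_rpow hB (by linarith) (by positivity)
  have hB1 : (B ^ (pr / q)) ^ (q / pr) = B := by
    rw [← Real.rpow_mul hB, hmul, Real.rpow_one]
  have hAB1 : ((A + B) ^ (pr / q)) ^ (q / pr) = A + B := by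
    rw [← Real.rpow_mul (by linarith), hmul, Real.rpow_one]
  have := diff_mono_aux hr hc ht1 h12
  rw [hB1, hAB1] at this
  linarith

lemma disj_sum_abs_aux {N : ℕ} (a : Fin N → ℝ) (hd : ∀ i j, i ≠ j → a i = 0 ∨ a j = 0) :
    |∑ i, a i| = ∑ i, |a i| := by
  by_cases h : ∃ i₀, a i₀ ≠ 0
  · obtain ⟨i₀, hi₀⟩ := h
    have hz : ∀ b ∈ Finset.univ, b ≠ i₀ → a b = 0 := fun b _ hb =>
      (hd b i₀ hb).resolve_right hi₀
    rw [Finset.sum_eq_single i₀ hz (by simp), Finset.sum_eq_single i₀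
      (fun b hb hbne => by rw [hz b hb hbne, abs_zero]) (by simp)]
  · push_neg at h
    simp [h]

lemma disj_sum_rpow_aux {q : ℝ} (hq : q ≠ 0) {N : ℕ} (a : Fin N → ℝ)
    (hd : ∀ i j, i ≠ j → a i = 0 ∨ a j = 0) :
    ∑ i, a i ^ q = (∑ i, a i) ^ q := by
  by_cases h : ∃ i₀, a i₀ ≠ 0
  · obtain ⟨i₀, hi₀⟩ := h
    have hz : ∀ b ∈ Finset.univ, b ≠ i₀ → a b = 0 := fun b _ hb =>
      (hd b i₀ hb).resolve_right hi₀
    rw [Finset.sum_eq_single i₀ hz (by simp),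
      Finset.sum_eq_single i₀ (fun b hb hbne => by rw [hz b hb hbne, Real.zero_rpow hq])
        (by simp)]
  · push_neg at h
    simp [h, Real.zero_rpow hq]

lemma step_lemma_aux {q pr : ℝ} (h1 : 1 ≤ pr) (h2 : pr ≤ q) {N : ℕ}
    (a : Fin N → ℝ) (ha : ∀ i, 0 ≤ a i) (A : ℝ) (hA : 0 ≤ A)
    (hsum : ∑ i, a i ^ q ≤ A ^ q)
    (s : Fin N → ℝ) (hs : ∀ i, 0 ≤ s i) (hd : ∀ i j, i ≠ j → s i = 0 ∨ s j = 0) :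
    ∑ i, (a i ^ pr + s i ^ pr) ^ (q / pr) ≤ (A ^ pr + (∑ i, s i) ^ pr) ^ (q / pr) := by
  have hpr0 : (0:ℝ) < pr := lt_of_lt_of_le one_pos h1
  have hq0 : (0:ℝ) < q := lt_of_lt_of_le hpr0 h2
  have hqpr : (0:ℝ) ≤ q / pr := by positivity
  have hid : ∀ t : ℝ, 0 ≤ t → (t ^ pr) ^ (q / pr) = t ^ q := by
    intro t ht
    rw [← Real.rpow_mul ht, mul_div_cancel₀ _ hpr0.ne']
  by_cases h : ∃ i₀, s i₀ ≠ 0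
  · obtain ⟨i₀, hi₀⟩ := h
    have hz : ∀ b ∈ Finset.univ, b ≠ i₀ → s b = 0 := fun b _ hb =>
      (hd b i₀ hb).resolve_right hi₀
    have hS : ∑ i, s i = s i₀ := Finset.sum_eq_single i₀ hz (by simp)
    rw [← Finset.add_sum_erase Finset.univ _ (Finset.mem_univ i₀)]
    have herase : ∀ b ∈ Finset.univ.erase i₀,
        (a b ^ pr + s b ^ pr) ^ (q / pr) = a b ^ q := by
      intro b hb
      rw [hz b (Finset.mem_univ b) (Finset.mem_erase.1 hb).1, Real.zero_rpow hpr0.ne',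
        add_zero, hid _ (ha b)]
    rw [Finset.sum_congr rfl herase]
    set Ac := ∑ b ∈ Finset.univ.erase i₀, a b ^ q with hAc
    have hAc0 : 0 ≤ Ac := Finset.sum_nonneg fun b _ => Real.rpow_nonneg (ha b) _
    set B := a i₀ ^ q with hBdef
    have hB0 : 0 ≤ B := Real.rpow_nonneg (ha i₀) _
    have hqq : q * (pr / q) = pr := by field_simp
    have hBpr : a i₀ ^ pr = B ^ (pr / q) := by
      rw [hBdef, ← Real.rpow_mul (ha i₀), hqq]
    have hsumAB : Ac + B ≤ A ^ q := by
      have : ∑ i, a i ^ q = B + Ac := by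
        rw [← Finset.add_sum_erase Finset.univ _ (Finset.mem_univ i₀)]
      linarith [hsum, this ▸ hsum]
    have hkey := key_ineq_aux h1 h2 (A := Ac) (B := B) (s := s i₀) hAc0 hB0 (hs i₀)
    rw [← hBpr] at hkey
    have hstep2 : ((Ac + B) ^ (pr / q) + s i₀ ^ pr) ^ (q / pr)
        ≤ (A ^ pr + (∑ i, s i) ^ pr) ^ (q / pr) := by
      rw [hS]
      apply Real.rpow_le_rpow (add_nonneg (Real.rpow_nonneg (by linarith) _)
        (Real.rpow_nonneg (hs i₀) _)) _ hqpr
      have : (Ac + B) ^ (pr / q) ≤ (A ^ q) ^ (pr / q) :=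
        Real.rpow_le_rpow (by linarith) hsumAB (by positivity)
      rw [← Real.rpow_mul hA, hqq] at this
      linarith
    calc (a i₀ ^ pr + s i₀ ^ pr) ^ (q / pr) + Ac
        ≤ ((Ac + B) ^ (pr / q) + s i₀ ^ pr) ^ (q / pr) := by linarith [hkey]
      _ ≤ _ := hstep2
  · push_neg at h
    have hS : ∑ i, s i = 0 := Finset.sum_eq_zero fun i _ => h i
    rw [hS, Real.zero_rpow hpr0.ne', add_zero, hid _ hA]
    calc ∑ i, (a i ^ pr + s i ^ pr) ^ (q / pr)
        = ∑ i, a i ^ q := Finset.sum_congr rfl fun i _ => by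
          rw [h i, Real.zero_rpow hpr0.ne', add_zero, hid _ (ha i)]
      _ ≤ A ^ q := hsum

lemma boxPlus_nonneg_aux (P : ℝ≥0∞) {t s : ℝ} (ht : 0 ≤ t) (hs : 0 ≤ s) :
    0 ≤ boxPlus P t s := by
  unfold boxPlus
  split
  · exact le_max_of_le_left ht
  · exact Real.rpow_nonneg (add_nonneg (Real.rpow_nonneg ht _) (Real.rpow_nonneg hs _)) _

lemma seqNorm_nonneg_aux (p : ℕ → ℝ≥0∞) (x : ℕ → ℝ) : ∀ k, 0 ≤ seqNorm p x k
  | 0 => boxPlus_nonneg_aux _ (abs_nonneg _) (abs_nonneg _)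
  | k + 1 => boxPlus_nonneg_aux _ (seqNorm_nonneg_aux p x k) (abs_nonneg _)

lemma boxPlus_rpow_aux {P : ℝ≥0∞} (hne : P ≠ ∞) {t s : ℝ} (ht : 0 ≤ t) (hs : 0 ≤ s)
    (q : ℝ) :
    boxPlus P t s ^ q = (t ^ P.toReal + s ^ P.toReal) ^ (q / P.toReal) := by
  unfold boxPlus
  rw [if_neg hne, ← Real.rpow_mul
    (add_nonneg (Real.rpow_nonneg ht _) (Real.rpow_nonneg hs _)), one_div_mul_eq_div]

lemma le_boxPlus_aux {P : ℝ≥0∞} (hne : P ≠ ∞) (hP : 1 ≤ P) {t s : ℝ}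
    (ht : 0 ≤ t) (hs : 0 ≤ s) : t ≤ boxPlus P t s := by
  have hpr : 1 ≤ P.toReal := by
    simpa using ENNReal.toReal_mono hne hP
  have hpr0 : (0:ℝ) < P.toReal := lt_of_lt_of_le one_pos hpr
  unfold boxPlus
  rw [if_neg hne]
  calc t = (t ^ P.toReal) ^ (1 / P.toReal) := by
        rw [← Real.rpow_mul ht, mul_one_div_cancel hpr0.ne', Real.rpow_one]
    _ ≤ _ := Real.rpow_le_rpow (Real.rpow_nonneg ht _)
        (le_add_of_nonneg_right (Real.rpow_nonneg hs _)) (by positivity)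

/-- Lower `q₀`-estimate for disjointly supported vectors in `ℓ^{p(·)}`
when `p : ℕ → [1,∞)` satisfies `p(n) ≤ q₀` for all `n`. -/
theorem lower_estimate (p : ℕ → ℝ≥0∞) (q₀ : ℝ) (hq₀ : 1 ≤ q₀)
    (hp1 : ∀ m, 1 ≤ p m) (hp : ∀ m, p m ≤ ENNReal.ofReal q₀)
    (N : ℕ) (x : Fin N → ℕ → ℝ) (hbdd : ∀ i, IsBddSeq (x i))
    (hdisj : ∀ i j, i ≠ j → ∀ m, x i m = 0 ∨ x j m = 0) :
    (∑ i, Phi p (x i) ^ q₀) ^ (1 / q₀) ≤ Phi p (fun m => ∑ i, x i m) := by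
  have hq0 : (0:ℝ) < q₀ := lt_of_lt_of_le one_pos hq₀
  set X : ℕ → ℝ := fun m => ∑ i, x i m with hX
  have hne : ∀ m, p m ≠ ∞ := fun m => ne_top_of_le_ne_top ENNReal.ofReal_ne_top (hp m)
  have hpr1 : ∀ m, 1 ≤ (p m).toReal := fun m => by
    simpa using ENNReal.toReal_mono (hne m) (hp1 m)
  have hpr2 : ∀ m, (p m).toReal ≤ q₀ := fun m =>
    ENNReal.toReal_le_of_le_ofReal (by linarith) (hp m)
  -- disjointness at a fixed position, for absolute values
  have habs : ∀ m, |X m| = ∑ i, |x i m| := fun m =>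
    disj_sum_abs_aux _ (fun i j hij => hdisj i j hij m)
  have habs_disj : ∀ m, ∀ i j : Fin N, i ≠ j → |x i m| = 0 ∨ |x j m| = 0 := by
    intro m i j hij
    rcases hdisj i j hij m with h | h
    · exact Or.inl (by rw [h, abs_zero])
    · exact Or.inr (by rw [h, abs_zero])
  have habs_rpow : ∀ m, ∑ i, |x i m| ^ q₀ = |X m| ^ q₀ := by
    intro m
    rw [disj_sum_rpow_aux hq0.ne' _ (habs_disj m), habs m]
  -- the main induction
  have claim : ∀ k, ∑ i, seqNorm p (x i) k ^ q₀ ≤ seqNorm p X k ^ q₀ := by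
    intro k
    induction k with
    | zero =>
      have h0 := step_lemma_aux (hpr1 0) (hpr2 0) (fun i => |x i 0|)
        (fun i => abs_nonneg _) |X 0| (abs_nonneg _) (le_of_eq (habs_rpow 0))
        (fun i => |x i 1|) (fun i => abs_nonneg _) (habs_disj 1)
      rw [← habs 1] at h0
      show ∑ i, boxPlus (p 0) |x i 0| |x i 1| ^ q₀ ≤ boxPlus (p 0) |X 0| |X 1| ^ q₀
      rw [boxPlus_rpow_aux (hne 0) (abs_nonneg _) (abs_nonneg _)]
      calc ∑ i, boxPlus (p 0) |x i 0| |x i 1| ^ q₀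
          = ∑ i, (|x i 0| ^ (p 0).toReal + |x i 1| ^ (p 0).toReal) ^ (q₀ / (p 0).toReal) :=
            Finset.sum_congr rfl fun i _ =>
              boxPlus_rpow_aux (hne 0) (abs_nonneg _) (abs_nonneg _) q₀
        _ ≤ _ := h0
    | succ k ih =>
      have h0 := step_lemma_aux (hpr1 (k + 1)) (hpr2 (k + 1))
        (fun i => seqNorm p (x i) k) (fun i => seqNorm_nonneg_aux p (x i) k)
        (seqNorm p X k) (seqNorm_nonneg_aux p X k) ih
        (fun i => |x i (k + 2)|) (fun i => abs_nonneg _) (habs_disj (k + 2))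
      rw [← habs (k + 2)] at h0
      show ∑ i, boxPlus (p (k + 1)) (seqNorm p (x i) k) |x i (k + 2)| ^ q₀
          ≤ boxPlus (p (k + 1)) (seqNorm p X k) |X (k + 2)| ^ q₀
      rw [boxPlus_rpow_aux (hne (k + 1)) (seqNorm_nonneg_aux p X k) (abs_nonneg _)]
      calc ∑ i, boxPlus (p (k + 1)) (seqNorm p (x i) k) |x i (k + 2)| ^ q₀
          = ∑ i, (seqNorm p (x i) k ^ (p (k + 1)).toReal
              + |x i (k + 2)| ^ (p (k + 1)).toReal) ^ (q₀ / (p (k + 1)).toReal) :=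
            Finset.sum_congr rfl fun i _ =>
              boxPlus_rpow_aux (hne (k + 1)) (seqNorm_nonneg_aux p (x i) k) (abs_nonneg _) q₀
        _ ≤ _ := h0
  -- monotonicity of the seminorms in `k`
  have hmonoSeq : ∀ y : ℕ → ℝ, Monotone fun k => seqNorm p y k := by
    intro y
    apply monotone_nat_of_le_succ
    intro k
    exact le_boxPlus_aux (hne (k + 1)) (hp1 (k + 1)) (seqNorm_nonneg_aux p y k) (abs_nonneg _)
  -- rewriting `Phi ^ q₀` as a supremum
  have hiSup : ∀ y : ℕ → ℝ, Phi p y ^ q₀ = ⨆ k, ENNReal.ofReal (seqNorm p y k ^ q₀) := by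
    intro y
    have h1 := OrderIso.map_iSup (ENNReal.orderIsoRpow q₀ hq0)
      (fun k => ENNReal.ofReal (seqNorm p y k))
    simp only [ENNReal.orderIsoRpow_apply] at h1
    rw [Phi, h1]
    exact iSup_congr fun k =>
      ENNReal.ofReal_rpow_of_nonneg (seqNorm_nonneg_aux p y k) hq0.le
  -- the main inequality at the level of `Phi ^ q₀`
  have hS : ∑ i, Phi p (x i) ^ q₀ ≤ Phi p X ^ q₀ := by
    calc ∑ i, Phi p (x i) ^ q₀
        = ∑ i, ⨆ k, ENNReal.ofReal (seqNorm p (x i) k ^ q₀) :=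
          Finset.sum_congr rfl fun i _ => hiSup (x i)
      _ = ⨆ k, ∑ i, ENNReal.ofReal (seqNorm p (x i) k ^ q₀) := by
          apply ENNReal.finsetSum_iSup_of_monotone
          intro i k l hkl
          exact ENNReal.ofReal_le_ofReal (Real.rpow_le_rpow
            (seqNorm_nonneg_aux p (x i) k) (hmonoSeq (x i) hkl) hq0.le)
      _ ≤ ⨆ k, ENNReal.ofReal (seqNorm p X k ^ q₀) := by
          apply iSup_mono
          intro k
          rw [← ENNReal.ofReal_sum_of_nonneg
            (fun i _ => Real.rpow_nonneg (seqNorm_nonneg_aux p (x i) k) _)]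
          exact ENNReal.ofReal_le_ofReal (claim k)
      _ = Phi p X ^ q₀ := (hiSup X).symm
  calc (∑ i, Phi p (x i) ^ q₀) ^ (1 / q₀)
      ≤ (Phi p X ^ q₀) ^ (1 / q₀) := ENNReal.rpow_le_rpow hS (by positivity)
    _ = Phi p X := by
        rw [← ENNReal.rpow_mul, mul_one_div_cancel hq0.ne', ENNReal.rpow_one]
end

section
/- Let p : ℕ → [1,∞) be such that C := ∏_{k=1}^∞ 2^{1 − 1/p(k)} converges to a finite value (equivalently, ∑_k (1 − 1/p(k)) < ∞). Then for every real sequence x one has Φ_p(x) ≤ ∑_{n=1}^∞ |x_n| ≤ C · Φ_p(x). In particular ℓ^{p(·)} and ℓ¹ coincide as sets and the identity map is an isomorphism with norm bounds 1 and C. -/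
open scoped ENNReal

lemma rL1 {a b q : ℝ} (ha : 0 ≤ a) (hb : 0 ≤ b) (hq : 1 ≤ q) :
    (a ^ q + b ^ q) ^ (1 / q) ≤ a + b := by
  have h := NNReal.rpow_add_rpow_le_add a.toNNReal b.toNNReal hq
  have := (NNReal.coe_le_coe).2 h
  push_cast at this
  rwa [Real.coe_toNNReal a ha, Real.coe_toNNReal b hb] at this

lemma rL2 {a b q : ℝ} (ha : 0 ≤ a) (hb : 0 ≤ b) (hq : 1 ≤ q) :
    a + b ≤ 2 ^ (1 - 1 / q) * (a ^ q + b ^ q) ^ (1 / q) := by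
  have hq0 : 0 < q := lt_of_lt_of_le one_pos hq
  have h := NNReal.rpow_add_le_mul_rpow_add_rpow a.toNNReal b.toNNReal hq
  have h' : (a + b) ^ q ≤ (2 : ℝ) ^ (q - 1) * (a ^ q + b ^ q) := by
    have := (NNReal.coe_le_coe).2 h
    push_cast at this
    rwa [Real.coe_toNNReal a ha, Real.coe_toNNReal b hb] at this
  have hab : 0 ≤ a + b := add_nonneg ha hb
  calc a + b = ((a + b) ^ q) ^ (1 / q) := by
        rw [← Real.rpow_mul hab, mul_one_div, div_self hq0.ne', Real.rpow_one]
    _ ≤ ((2 : ℝ) ^ (q - 1) * (a ^ q + b ^ q)) ^ (1 / q) := by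
        apply Real.rpow_le_rpow (Real.rpow_nonneg hab q) h' (by positivity)
    _ = 2 ^ (1 - 1 / q) * (a ^ q + b ^ q) ^ (1 / q) := by
        rw [Real.mul_rpow (by positivity) (by positivity), ← Real.rpow_mul (by norm_num)]
        congr 2
        field_simp

/-- If `C = ∏ₖ 2^{1 - 1/p(k)}` is finite (equivalently `∑ₖ (1 - 1/p(k)) < ∞`,
so that `C = 2^{∑ₖ (1 - 1/p(k))}`), then
`Φ_p(x) ≤ ∑ₙ |xₙ| ≤ C · Φ_p(x)` for every real sequence `x`;
in particular `ℓ^{p(·)} = ℓ¹` with the identity an isomorphism. -/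
theorem isomorphic_to_l1 (p : ℕ → ℝ) (hp : ∀ k, 1 ≤ p k)
    (hsum : Summable fun k => 1 - 1 / p k) (x : ℕ → ℝ) :
    Phi (fun k => ENNReal.ofReal (p k)) x ≤ ∑' n, ENNReal.ofReal |x n| ∧
    ∑' n, ENNReal.ofReal |x n| ≤
      ENNReal.ofReal ((2 : ℝ) ^ (∑' k, (1 - 1 / p k))) *
        Phi (fun k => ENNReal.ofReal (p k)) x := by
  set P : ℕ → ℝ≥0∞ := fun k => ENNReal.ofReal (p k) with hP
  have hp0 : ∀ k, (0:ℝ) < p k := fun k => lt_of_lt_of_le one_pos (hp k)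
  have hbox : ∀ k t s, boxPlus (P k) t s = (t ^ p k + s ^ p k) ^ (1 / p k) := by
    intro k t s
    rw [boxPlus, if_neg ENNReal.ofReal_ne_top, ENNReal.toReal_ofReal (hp0 k).le]
  have hnn : ∀ k, 0 ≤ seqNorm P x k := by
    intro k
    induction k with
    | zero =>
      rw [seqNorm, hbox]
      positivity
    | succ k ih =>
      rw [seqNorm, hbox]
      positivity
  -- Lemma A
  have hA : ∀ k, seqNorm P x k ≤ ∑ i ∈ Finset.range (k + 2), |x i| := by
    intro k
    induction k with
    | zero =>
      rw [seqNorm, hbox]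
      simpa [Finset.sum_range_succ] using rL1 (abs_nonneg (x 0)) (abs_nonneg (x 1)) (hp 0)
    | succ k ih =>
      rw [seqNorm, hbox]
      calc (seqNorm P x k ^ p (k+1) + |x (k+2)| ^ p (k+1)) ^ (1 / p (k+1))
          ≤ seqNorm P x k + |x (k+2)| := rL1 (hnn k) (abs_nonneg _) (hp (k+1))
        _ ≤ ∑ i ∈ Finset.range (k + 3), |x i| := by
            rw [Finset.sum_range_succ]
            exact add_le_add_left ih _
  -- nonneg terms of hsum, and C bounds
  have hterm : ∀ k, 0 ≤ 1 - 1 / p k := by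
    intro k
    have : 1 / p k ≤ 1 := by
      rw [div_le_one (hp0 k)]; exact hp k
    linarith
  have hCle : ∀ n, ∑ j ∈ Finset.range n, (1 - 1 / p j) ≤ ∑' k, (1 - 1 / p k) :=
    fun n => Summable.sum_le_tsum _ (fun i _ => hterm i) hsum
  have hC2 : ∀ n, (2:ℝ) ^ (∑ j ∈ Finset.range n, (1 - 1 / p j)) ≤
      (2:ℝ) ^ (∑' k, (1 - 1 / p k)) := by
    intro n
    exact Real.rpow_le_rpow_of_exponent_le one_le_two (hCle n)
  have hC1 : ∀ n, (1:ℝ) ≤ (2:ℝ) ^ (∑ j ∈ Finset.range n, (1 - 1 / p j)) := by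
    intro n
    exact Real.one_le_rpow one_le_two (Finset.sum_nonneg fun i _ => hterm i)
  -- Lemma B
  have hB : ∀ k, ∑ i ∈ Finset.range (k + 2), |x i| ≤
      (2:ℝ) ^ (∑ j ∈ Finset.range (k + 1), (1 - 1 / p j)) * seqNorm P x k := by
    intro k
    induction k with
    | zero =>
      rw [seqNorm, hbox]
      simpa [Finset.sum_range_succ] using rL2 (abs_nonneg (x 0)) (abs_nonneg (x 1)) (hp 0)
    | succ k ih =>
      have h2 : seqNorm P x k + |x (k+2)| ≤
          (2:ℝ) ^ (1 - 1 / p (k+1)) * seqNorm P x (k+1) := by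
        rw [seqNorm, hbox]
        exact rL2 (hnn k) (abs_nonneg _) (hp (k+1))
      calc ∑ i ∈ Finset.range (k + 3), |x i|
          = (∑ i ∈ Finset.range (k + 2), |x i|) + |x (k+2)| := Finset.sum_range_succ _ _
        _ ≤ (2:ℝ) ^ (∑ j ∈ Finset.range (k + 1), (1 - 1 / p j)) * seqNorm P x k
              + (2:ℝ) ^ (∑ j ∈ Finset.range (k + 1), (1 - 1 / p j)) * |x (k+2)| := by
            refine add_le_add ih ?_
            exact le_mul_of_one_le_left (abs_nonneg _) (hC1 _)
        _ = (2:ℝ) ^ (∑ j ∈ Finset.range (k + 1), (1 - 1 / p j)) *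
              (seqNorm P x k + |x (k+2)|) := by ring
        _ ≤ (2:ℝ) ^ (∑ j ∈ Finset.range (k + 1), (1 - 1 / p j)) *
              ((2:ℝ) ^ (1 - 1 / p (k+1)) * seqNorm P x (k+1)) := by
            refine mul_le_mul_of_nonneg_left h2 (by positivity)
        _ = (2:ℝ) ^ (∑ j ∈ Finset.range (k + 2), (1 - 1 / p j)) * seqNorm P x (k+1) := by
            conv_rhs => rw [Finset.sum_range_succ, Real.rpow_add two_pos]
            exact (mul_assoc _ _ _).symm
  constructor
  · -- Phi ≤ tsum
    refine iSup_le fun k => ?_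
    calc ENNReal.ofReal (seqNorm P x k)
        ≤ ENNReal.ofReal (∑ i ∈ Finset.range (k + 2), |x i|) :=
          ENNReal.ofReal_le_ofReal (hA k)
      _ = ∑ i ∈ Finset.range (k + 2), ENNReal.ofReal |x i| :=
          ENNReal.ofReal_sum_of_nonneg (fun i _ => abs_nonneg _)
      _ ≤ ∑' n, ENNReal.ofReal |x n| := ENNReal.sum_le_tsum _
  · -- tsum ≤ C * Phi
    rw [ENNReal.tsum_eq_iSup_sum]
    refine iSup_le fun s => ?_
    obtain ⟨n, hn⟩ : ∃ n, s ⊆ Finset.range (n + 2) := by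
      rcases s.exists_nat_subset_range with ⟨n, hn⟩
      exact ⟨n, hn.trans (Finset.range_subset_range.2 (by omega))⟩
    calc ∑ i ∈ s, ENNReal.ofReal |x i|
        ≤ ∑ i ∈ Finset.range (n + 2), ENNReal.ofReal |x i| :=
          Finset.sum_le_sum_of_subset hn
      _ = ENNReal.ofReal (∑ i ∈ Finset.range (n + 2), |x i|) :=
          (ENNReal.ofReal_sum_of_nonneg (fun i _ => abs_nonneg _)).symm
      _ ≤ ENNReal.ofReal ((2:ℝ) ^ (∑' k, (1 - 1 / p k)) * seqNorm P x n) := by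
          refine ENNReal.ofReal_le_ofReal ((hB n).trans ?_)
          exact mul_le_mul_of_nonneg_right (hC2 _) (hnn n)
      _ = ENNReal.ofReal ((2:ℝ) ^ (∑' k, (1 - 1 / p k))) *
            ENNReal.ofReal (seqNorm P x n) := ENNReal.ofReal_mul (by positivity)
      _ ≤ ENNReal.ofReal ((2:ℝ) ^ (∑' k, (1 - 1 / p k))) * Phi P x := by
          exact mul_le_mul_right (le_iSup (fun k => ENNReal.ofReal (seqNorm P x k)) n) _
end
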